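/- Let G be a non-Hamiltonian graph on n ≥ 3 vertices possessing a Hamiltonian path v_1, v_2, …, v_n, and set x = v_1 and y = v_n. Then for every edge v_i v_j of G with 1 ≤ i < i+1 < j ≤ n: if v_{i+1} x is an edge of G then v_{j−1} y is not an edge of G, and if v_{i+1} y is an edge of G then v_{j−1} x is not an edge of G. -/

import Mathlib

open SimpleGraph

lemma asc_walk {V : Type*} {n : ℕ} (G : SimpleGraph V) (v : ℕ → V)
    (hpath : ∀ i, 1 ≤ i → i < n → G.Adj (v i) (v (i + 1))) :
    ∀ (k a : ℕ), 1 ≤ a → a + k ≤ n →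
      ∃ w : G.Walk (v a) (v (a + k)), w.support = (List.range' a (k+1)).map v := by
  intro k
  induction k with
  | zero => intro a _ _; exact ⟨Walk.nil, by simp⟩
  | succ k ih =>
    intro a h1 h2
    obtain ⟨w, hw⟩ := ih (a+1) (by omega) (by omega)
    refine ⟨(Walk.cons (hpath a h1 (by omega)) w).copy rfl (congrArg v (by omega)), ?_⟩
    rw [Walk.support_copy, Walk.support_cons, hw, List.range'_succ]
    simp [List.range'_succ]

lemma head_of_edge {V : Type*} {G : SimpleGraph V} {a b c : V} (p : G.Walk a b)
    (hn : p.support.Nodup) (he : s(a, c) ∈ p.edges) : p.support.tail.head? = some c := by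
  cases p with
  | nil => simp at he
  | cons h q =>
    rename_i d
    rw [Walk.edges_cons, List.mem_cons] at he
    rcases he with he | he
    · have : a = a ∧ c = d ∨ a = d ∧ c = a := by
        rwa [Sym2.eq_iff] at he
      rcases this with ⟨_, rfl⟩ | ⟨rfl, rfl⟩
      · rw [Walk.support_cons, List.tail_cons, q.support_eq_cons]; rfl
      · exact absurd rfl h.ne
    · exfalso
      have := q.fst_mem_support_of_mem_edges he
      rw [Walk.support_cons, List.nodup_cons] at hn
      exact hn.1 this

lemma asc_walk' {V : Type*} {n : ℕ} (G : SimpleGraph V) (v : ℕ → V)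
    (hpath : ∀ i, 1 ≤ i → i < n → G.Adj (v i) (v (i + 1)))
    (a b : ℕ) (h1 : 1 ≤ a) (h2 : a ≤ b) (h3 : b ≤ n) :
    ∃ w : G.Walk (v a) (v b), w.support = (List.range' a (b + 1 - a)).map v := by
  obtain ⟨w, hw⟩ := asc_walk G v hpath (b - a) a h1 (by omega)
  refine ⟨w.copy rfl (congrArg v (by omega)), ?_⟩
  rw [Walk.support_copy, hw, show b - a + 1 = b + 1 - a by omega]

lemma key1 {V : Type*} [DecidableEq V] {n : ℕ} (hn : 3 ≤ n) (G : SimpleGraph V) (v : ℕ → V)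
    (hinj : ∀ i j, 1 ≤ i → i ≤ n → 1 ≤ j → j ≤ n → v i = v j → i = j)
    (hsurj : ∀ w : V, ∃ i, 1 ≤ i ∧ i ≤ n ∧ v i = w)
    (hpath : ∀ i, 1 ≤ i → i < n → G.Adj (v i) (v (i + 1)))
    {i j : ℕ} (h1 : 1 ≤ i) (h2 : i + 1 < j) (h3 : j ≤ n)
    (hij : G.Adj (v i) (v j))
    (ha : G.Adj (v (i + 1)) (v 1)) (hb : G.Adj (v (j - 1)) (v n)) :
    ∃ a : V, ∃ p : G.Walk a a, p.IsHamiltonianCycle := by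
  -- segment 1 : from v (i+1) to v (j-1)
  obtain ⟨s1, hs1⟩ := asc_walk' G v hpath (i + 1) (j - 1) (by omega) (by omega) (by omega)
  rw [show j - 1 + 1 - (i + 1) = j - i - 1 by omega] at hs1
  obtain ⟨s2, hs2⟩ := asc_walk' G v hpath j n (by omega) (by omega) (by omega)
  obtain ⟨s3, hs3⟩ := asc_walk' G v hpath 1 i (by omega) (by omega) (by omega)
  rw [show i + 1 - 1 = i by omega] at hs3
  set q : G.Walk (v (i+1)) (v 1) :=
    s1.append (Walk.cons hb (s2.reverse.append (Walk.cons hij.symm s3.reverse))) with hq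
  set I : List ℕ := List.range' (i+1) (j - i - 1) ++
      ((List.range' j (n + 1 - j)).reverse ++ (List.range' 1 i).reverse) with hI
  have hmemI : ∀ m, m ∈ I ↔ 1 ≤ m ∧ m ≤ n := by
    intro m
    simp only [hI, List.mem_append, List.mem_reverse, List.mem_range'_1]
    omega
  have hInodup : I.Nodup := by
    have hnd : ∀ s k : ℕ, (List.range' s k).Nodup := fun s k => List.nodup_range' (s := s) (n := k) 1 one_pos
    simp only [hI, List.nodup_append, List.nodup_reverse, List.mem_append,
      List.mem_reverse, List.mem_range'_1, List.Disjoint]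
    refine ⟨hnd _ _, ⟨hnd _ _, hnd _ _, ?_⟩, ?_⟩
    · intro m hm hm'; omega
    · intro m hm hm'; omega
  have hqs : q.support = I.map v := by
    rw [hq, Walk.support_append, Walk.support_cons, List.tail_cons, Walk.support_append,
      Walk.support_cons, List.tail_cons, Walk.support_reverse, Walk.support_reverse,
      hs1, hs2, hs3, hI]
    simp [List.map_reverse]
  have hnodup : q.support.Nodup := by
    rw [hqs]
    refine List.Nodup.map_on ?_ hInodup
    intro a haI b hbI hab
    rw [hmemI] at haI hbI
    exact hinj a b haI.1 haI.2 hbI.1 hbI.2 hab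
  refine ⟨v 1, Walk.cons ha.symm q, ?_⟩
  rw [Walk.isHamiltonianCycle_iff_isCycle_and_support_count_tail_eq_one]
  constructor
  · rw [Walk.cons_isCycle_iff]
    refine ⟨by rw [Walk.isPath_def]; exact hnodup, ?_⟩
    intro hmem
    rw [Sym2.eq_swap] at hmem
    have := head_of_edge q hnodup hmem
    -- compute the second vertex of q
    have hItail : I = (i+1) :: ((List.range' (i+2) (j - i - 2)) ++
        ((List.range' j (n + 1 - j)).reverse ++ (List.range' 1 i).reverse)) := by
      rw [hI, show j - i - 1 = (j - i - 2) + 1 by omega, List.range'_succ]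
      simp
    rw [hqs, hItail] at this
    simp only [List.map_cons, List.tail_cons] at this
    rcases Nat.lt_or_ge (i + 2) j with hc | hc
    · -- second vertex is v (i+2)
      rw [show j - i - 2 = (j - i - 3) + 1 by omega, List.range'_succ] at this
      simp only [List.map_cons, List.map_append, List.cons_append, List.head?_cons,
        Option.some.injEq] at this
      have := hinj (i+2) 1 (by omega) (by omega) (by omega) (by omega) this
      omega
    · -- j = i + 2, second vertex is v n
      rw [show j - i - 2 = 0 by omega] at this
      rw [show n + 1 - j = (n - j) + 1 by omega, List.range'_concat] at this
      simp only [List.range'_zero, List.map_nil, List.nil_append, List.reverse_append,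
        List.reverse_cons, List.reverse_nil, List.nil_append, List.map_append, List.map_cons,
        List.cons_append, List.head?_cons, Option.some.injEq, List.map_reverse] at this
      have := hinj (j + 1 * (n - j)) 1 (by omega) (by omega) (by omega) (by omega) this
      omega
  · intro a
    obtain ⟨m, hm1, hm2, rfl⟩ := hsurj a
    rw [Walk.support_cons, List.tail_cons, hqs]
    refine List.count_eq_one_of_mem ?_ ?_
    · refine List.Nodup.map_on ?_ hInodup
      intro a haI b hbI hab
      rw [hmemI] at haI hbI
      exact hinj a b haI.1 haI.2 hbI.1 hbI.2 hab
    · exact List.mem_map_of_mem (f := v) ((hmemI m).2 ⟨hm1, hm2⟩)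

lemma key2 {V : Type*} [DecidableEq V] {n : ℕ} (hn : 3 ≤ n) (G : SimpleGraph V) (v : ℕ → V)
    (hinj : ∀ i j, 1 ≤ i → i ≤ n → 1 ≤ j → j ≤ n → v i = v j → i = j)
    (hsurj : ∀ w : V, ∃ i, 1 ≤ i ∧ i ≤ n ∧ v i = w)
    (hpath : ∀ i, 1 ≤ i → i < n → G.Adj (v i) (v (i + 1)))
    {i j : ℕ} (h1 : 1 ≤ i) (h2 : i + 1 < j) (h3 : j ≤ n)
    (hij : G.Adj (v i) (v j))
    (ha : G.Adj (v (i + 1)) (v n)) (hb : G.Adj (v (j - 1)) (v 1)) :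
    ∃ a : V, ∃ p : G.Walk a a, p.IsHamiltonianCycle := by
  obtain ⟨s1, hs1⟩ := asc_walk' G v hpath (i + 1) (j - 1) (by omega) (by omega) (by omega)
  rw [show j - 1 + 1 - (i + 1) = j - i - 1 by omega] at hs1
  obtain ⟨s2, hs2⟩ := asc_walk' G v hpath j n (by omega) (by omega) (by omega)
  obtain ⟨s3, hs3⟩ := asc_walk' G v hpath 1 i (by omega) (by omega) (by omega)
  rw [show i + 1 - 1 = i by omega] at hs3
  set q : G.Walk (v (j-1)) (v 1) :=
    s1.reverse.append (Walk.cons ha (s2.reverse.append (Walk.cons hij.symm s3.reverse))) with hq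
  set I : List ℕ := (List.range' (i+1) (j - i - 1)).reverse ++
      ((List.range' j (n + 1 - j)).reverse ++ (List.range' 1 i).reverse) with hI
  have hmemI : ∀ m, m ∈ I ↔ 1 ≤ m ∧ m ≤ n := by
    intro m
    simp only [hI, List.mem_append, List.mem_reverse, List.mem_range'_1]
    omega
  have hInodup : I.Nodup := by
    have hnd : ∀ s k : ℕ, (List.range' s k).Nodup := fun s k => List.nodup_range' (s := s) (n := k) 1 one_pos
    simp only [hI, List.nodup_append, List.nodup_reverse, List.mem_append,
      List.mem_reverse, List.mem_range'_1, List.Disjoint]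
    refine ⟨hnd _ _, ⟨hnd _ _, hnd _ _, ?_⟩, ?_⟩
    · intro m hm hm'; omega
    · intro m hm hm'; omega
  have hqs : q.support = I.map v := by
    rw [hq, Walk.support_append, Walk.support_cons, List.tail_cons, Walk.support_append,
      Walk.support_cons, List.tail_cons, Walk.support_reverse, Walk.support_reverse,
      Walk.support_reverse, hs1, hs2, hs3, hI]
    simp [List.map_reverse]
  have hnodup : q.support.Nodup := by
    rw [hqs]
    refine List.Nodup.map_on ?_ hInodup
    intro a haI b hbI hab
    rw [hmemI] at haI hbI
    exact hinj a b haI.1 haI.2 hbI.1 hbI.2 hab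
  refine ⟨v 1, Walk.cons hb.symm q, ?_⟩
  rw [Walk.isHamiltonianCycle_iff_isCycle_and_support_count_tail_eq_one]
  constructor
  · rw [Walk.cons_isCycle_iff]
    refine ⟨by rw [Walk.isPath_def]; exact hnodup, ?_⟩
    intro hmem
    rw [Sym2.eq_swap] at hmem
    have := head_of_edge q hnodup hmem
    have hItail : I = (j-1) :: ((List.range' (i+1) (j - i - 2)).reverse ++
        ((List.range' j (n + 1 - j)).reverse ++ (List.range' 1 i).reverse)) := by
      rw [hI, show j - i - 1 = (j - i - 2) + 1 by omega, List.range'_concat]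
      simp only [List.reverse_append, List.reverse_cons, List.reverse_nil, List.nil_append,
        List.cons_append]
      congr 1
      omega
    rw [hqs, hItail] at this
    simp only [List.map_cons, List.tail_cons] at this
    rcases Nat.lt_or_ge (i + 2) j with hc | hc
    · -- second vertex is v (j-2)
      rw [show j - i - 2 = (j - i - 3) + 1 by omega, List.range'_concat] at this
      simp only [List.reverse_append, List.reverse_cons, List.reverse_nil, List.nil_append,
        List.cons_append, List.map_cons, List.map_append, List.head?_cons,
        Option.some.injEq] at this
      have := hinj (i + 1 + 1 * (j - i - 3)) 1 (by omega) (by omega) (by omega) (by omega) this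
      omega
    · -- j = i + 2, second vertex is v n
      rw [show j - i - 2 = 0 by omega] at this
      rw [show n + 1 - j = (n - j) + 1 by omega, List.range'_concat] at this
      simp only [List.range'_zero, List.reverse_nil, List.map_nil, List.nil_append,
        List.reverse_append, List.reverse_cons, List.map_append, List.map_cons,
        List.cons_append, List.head?_cons, Option.some.injEq, List.map_reverse] at this
      have := hinj (j + 1 * (n - j)) 1 (by omega) (by omega) (by omega) (by omega) this
      omega
  · intro a
    obtain ⟨m, hm1, hm2, rfl⟩ := hsurj a
    rw [Walk.support_cons, List.tail_cons, hqs]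
    refine List.count_eq_one_of_mem ?_ ?_
    · refine List.Nodup.map_on ?_ hInodup
      intro a haI b hbI hab
      rw [hmemI] at haI hbI
      exact hinj a b haI.1 haI.2 hbI.1 hbI.2 hab
    · exact List.mem_map_of_mem (f := v) ((hmemI m).2 ⟨hm1, hm2⟩)

/-- Let `G` be a non-Hamiltonian graph on `n ≥ 3` vertices possessing a Hamiltonian
path `v_1, v_2, …, v_n`, and set `x = v_1` and `y = v_n`. Then for every edge
`v_i v_j` of `G` with `1 ≤ i < i+1 < j ≤ n`: if `v_{i+1} x` is an edge of `G` then
`v_{j-1} y` is not an edge of `G`, and if `v_{i+1} y` is an edge of `G` then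
`v_{j-1} x` is not an edge of `G`. -/
theorem stmt_8 {V : Type*} [Fintype V] [DecidableEq V] {n : ℕ} (hn : 3 ≤ n)
    (G : SimpleGraph V) (hham : ¬ G.IsHamiltonian)
    (v : ℕ → V)
    (hinj : ∀ i j, 1 ≤ i → i ≤ n → 1 ≤ j → j ≤ n → v i = v j → i = j)
    (hsurj : ∀ w : V, ∃ i, 1 ≤ i ∧ i ≤ n ∧ v i = w)
    (hpath : ∀ i, 1 ≤ i → i < n → G.Adj (v i) (v (i + 1))) :
    ∀ i j, 1 ≤ i → i + 1 < j → j ≤ n → G.Adj (v i) (v j) →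
      (G.Adj (v (i + 1)) (v 1) → ¬ G.Adj (v (j - 1)) (v n)) ∧
      (G.Adj (v (i + 1)) (v n) → ¬ G.Adj (v (j - 1)) (v 1)) := by
  intro i j hi hij1 hj hadj
  constructor
  · intro hx hy
    exact hham fun _ => key1 hn G v hinj hsurj hpath hi hij1 hj hadj hx hy
  · intro hx hy
    exact hham fun _ => key2 hn G v hinj hsurj hpath hi hij1 hj hadj hx hy
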